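/- Let V be a finite-dimensional real normed vector space, p ∈ (1, ∞), and let D : V → V* be monotone, hemicontinuous, and satisfy ‖D(x)‖_{V*} ≤ K(1 + ‖x‖_V^{p−1}) for all x ∈ V for some constant K > 0. Then D is continuous from V to V* (both with their norm topologies). -/
import Mathlib
set_option maxHeartbeats 1000000


open Filter Topology

/-- Minty's trick: if `D` is monotone and hemicontinuous and
`0 ≤ (f - D z)(x - z)` for all `z`, then `f = D x`. -/
lemma minty_aux {V : Type*} [NormedAddCommGroup V] [NormedSpace ℝ V]
    (D : V → V →L[ℝ] ℝ)
    (hhemi : ∀ x y z : V,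
      Tendsto (fun ε : ℝ => D (x + ε • y) z) (𝓝 0) (𝓝 (D x z)))
    (f : V →L[ℝ] ℝ) (x : V)
    (hkey : ∀ z : V, 0 ≤ (f - D z) (x - z)) : f = D x := by
  have hall : ∀ w : V, 0 ≤ (f - D x) w := by
    intro w
    -- consider z = x - t • w for t > 0
    have h1 : ∀ t : ℝ, 0 < t → 0 ≤ (f - D (x + t • (-w))) w := by
      intro t ht
      have := hkey (x - t • w)
      have hx : x - (x - t • w) = t • w := by abel
      rw [hx] at this
      have h2 : (f - D (x - t • w)) (t • w) = t * (f - D (x - t • w)) w := by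
        simp [map_smul, smul_eq_mul]
      rw [h2] at this
      have := nonneg_of_mul_nonneg_right this ht
      simpa [sub_eq_add_neg, smul_neg, neg_smul] using this
    -- take the limit t → 0⁺ using hemicontinuity
    have hten : Tendsto (fun t : ℝ => (f - D (x + t • (-w))) w) (𝓝[>] 0)
        (𝓝 ((f - D x) w)) := by
      have hD : Tendsto (fun t : ℝ => D (x + t • (-w)) w) (𝓝 0) (𝓝 (D x w)) :=
        hhemi x (-w) w
      have : Tendsto (fun t : ℝ => f w - D (x + t • (-w)) w) (𝓝 0)
          (𝓝 (f w - D x w)) := tendsto_const_nhds.sub hD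
      simpa [ContinuousLinearMap.sub_apply] using this.mono_left nhdsWithin_le_nhds
    refine ge_of_tendsto hten ?_
    filter_upwards [self_mem_nhdsWithin] with t ht
    exact h1 t ht
  ext w
  have h1 := hall w
  have h2 := hall (-w)
  simp only [map_neg] at h2
  have : (f - D x) w = 0 := le_antisymm (by linarith) h1
  have := sub_eq_zero.mp (by simpa [ContinuousLinearMap.sub_apply] using this)
  simpa using this

/-- Lemma 4.1, finite-dimensional case: a monotone, hemicontinuous operator with
polynomial growth on a finite-dimensional normed space is (norm-to-norm) continuous. -/
theorem stmt_4
    {V : Type*} [NormedAddCommGroup V] [NormedSpace ℝ V] [FiniteDimensional ℝ V]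
    (p : ℝ) (hp : 1 < p)
    (D : V → V →L[ℝ] ℝ)
    (hmono : ∀ x y : V, 0 ≤ (D x - D y) (x - y))
    (hhemi : ∀ x y z : V,
      Tendsto (fun ε : ℝ => D (x + ε • y) z) (𝓝 0) (𝓝 (D x z)))
    (K : ℝ) (hK : 0 < K)
    (hgrowth : ∀ x : V, ‖D x‖ ≤ K * (1 + ‖x‖ ^ (p - 1))) :
    Continuous D := by
  rw [continuous_iff_seqContinuous]
  intro u x hu
  apply tendsto_of_subseq_tendsto
  intro ns hns
  set v : ℕ → V := u ∘ ns with hv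
  have hvx : Tendsto v atTop (𝓝 x) := hu.comp hns
  -- bound on ‖v n‖
  obtain ⟨C, hC⟩ : ∃ C : ℝ, ∀ n, ‖v n‖ ≤ C := by
    have := hvx.norm.bddAbove_range
    obtain ⟨C, hC⟩ := this
    exact ⟨C, fun n => hC ⟨n, rfl⟩⟩
  have hC0 : 0 ≤ C := le_trans (norm_nonneg _) (hC 0)
  -- bound on ‖D (v n)‖
  set R : ℝ := K * (1 + C ^ (p - 1)) with hR
  have hDb : ∀ n, D (v n) ∈ Metric.closedBall (0 : V →L[ℝ] ℝ) R := by
    intro n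
    rw [Metric.mem_closedBall, dist_zero_right]
    refine le_trans (hgrowth (v n)) ?_
    have : ‖v n‖ ^ (p - 1) ≤ C ^ (p - 1) :=
      Real.rpow_le_rpow (norm_nonneg _) (hC n) (by linarith)
    nlinarith
  -- extract convergent subsequence
  obtain ⟨f, _, φ, hφ, hDf⟩ :=
    (isCompact_closedBall (0 : V →L[ℝ] ℝ) R).tendsto_subseq hDb
  refine ⟨φ, ?_⟩
  -- identify the limit via Minty's trick
  have hkey : ∀ z : V, 0 ≤ (f - D z) (x - z) := by
    intro z
    have hev : Tendsto (fun k => (D (v (φ k)) - D z) (v (φ k) - z)) atTop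
        (𝓝 ((f - D z) (x - z))) := by
      have h1 : Tendsto (fun k => D (v (φ k)) - D z) atTop (𝓝 (f - D z)) :=
        hDf.sub tendsto_const_nhds
      have h2 : Tendsto (fun k => v (φ k) - z) atTop (𝓝 (x - z)) :=
        (hvx.comp hφ.tendsto_atTop).sub tendsto_const_nhds
      have := isBoundedBilinearMap_apply.continuous.tendsto ((f - D z), (x - z))
      exact this.comp (h1.prodMk_nhds h2)
    exact ge_of_tendsto hev (Eventually.of_forall fun k => hmono (v (φ k)) z)
  have hfx : f = D x := minty_aux D hhemi f x hkey
  rw [← hfx]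
  exact hDf
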